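/- Let ν be a probability measure on ℝ with ν({0}) < 1, let σ > 0, let n be a positive integer, and let p ∈ (0,1). Define t₁(c) = 2(1 − Φ(c)) and t₂(c) = 1 − ∫[Φ(−c − √n·μ/σ) + 1 − Φ(c − √n·μ/σ)] dν(μ), and BFDR(c) = (1−p)t₁(c) / ((1−p)t₁(c) + p(1 − t₂(c))) for c ≥ 0. Then BFDR is continuous and strictly decreasing on [0,∞), with BFDR(0) = 1 − p and BFDR(c) → 0 as c → ∞. -/

import Mathlib

open MeasureTheory ProbabilityTheory Filter
open scoped ENNReal Classical

noncomputable section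

/-- The standard normal cumulative distribution function `Φ`. -/
def Phi (x : ℝ) : ℝ :=
  ∫ t in Set.Iic x, (Real.sqrt (2 * Real.pi))⁻¹ * Real.exp (-(t ^ 2) / 2)

/-- Type I error of the rule rejecting `H₀ᵢ : μᵢ = 0` when the sample mean
falls outside `(a, b)`. -/
def typeI (σ : ℝ) (n : ℕ) (a b : ℝ) : ℝ :=
  Phi (Real.sqrt n * a / σ) + 1 - Phi (Real.sqrt n * b / σ)

/-- Type II error of the rule rejecting when the sample mean falls outside `(a, b)`. -/
def typeII (σ : ℝ) (ν : Measure ℝ) (n : ℕ) (a b : ℝ) : ℝ :=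
  ∫ μ, (Phi (Real.sqrt n * (b - μ) / σ) - Phi (Real.sqrt n * (a - μ) / σ)) ∂ν

/-- Bayes risk of a fixed-threshold rule:
`R = m (1-p) t₁ δ₀ + m p t₂ δ_A`. -/
def fixedRisk (m : ℕ) (σ : ℝ) (ν : Measure ℝ) (n : ℕ) (p δ0 δA a b : ℝ) : ℝ :=
  (m : ℝ) * (1 - p) * typeI σ n a b * δ0 + (m : ℝ) * p * typeII σ ν n a b * δA

/-- The defining equation of a Bayes-oracle critical value:
`δ f = ∫ exp (n (x μ/σ² - μ²/(2σ²))) dν(μ)`. -/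
def OracleEq (σ : ℝ) (ν : Measure ℝ) (n : ℕ) (fδ x : ℝ) : Prop :=
  fδ = ∫ μ, Real.exp ((n : ℝ) * (x * μ / σ ^ 2 - μ ^ 2 / (2 * σ ^ 2))) ∂ν

/-- The sparsity ratio `f = (1 - p) / p`. -/
def fsp (p : ℝ) : ℝ := (1 - p) / p

/-- `a` and `b` are the Bayes-oracle critical values. -/
def IsOracle (σ : ℝ) (ν : Measure ℝ) (n : ℕ → ℕ) (p δ : ℕ → ℝ) (a b : ℕ → ℝ) : Prop :=
  ∀ m, a m < 0 ∧ 0 < b m ∧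
    OracleEq σ ν (n m) (δ m * fsp (p m)) (a m) ∧
    OracleEq σ ν (n m) (δ m * fsp (p m)) (b m)

/-- Assumption (A): `n → ∞`, `δ f → c ∈ (0, ∞]` and `2 log (δ f) / n → C` with `0 ≤ C < ∞`. -/
def AssumptionA (n : ℕ → ℕ) (p δ : ℕ → ℝ) (C : ℝ) : Prop :=
  Tendsto (fun m => (n m : ℝ)) atTop atTop ∧
    ((∃ c : ℝ, 0 < c ∧ Tendsto (fun m => δ m * fsp (p m)) atTop (nhds c)) ∨
      Tendsto (fun m => δ m * fsp (p m)) atTop atTop) ∧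
    0 ≤ C ∧
    Tendsto (fun m => 2 * Real.log (δ m * fsp (p m)) / (n m : ℝ)) atTop (nhds C)

/-- Assumption (B): `n → ∞`, `p → 0`, `log δ = o(log p)` and `δ` bounded from above. -/
def AssumptionB (n : ℕ → ℕ) (p δ : ℕ → ℝ) : Prop :=
  Tendsto (fun m => (n m : ℝ)) atTop atTop ∧
    Tendsto p atTop (nhds 0) ∧
    Tendsto (fun m => Real.log (δ m) / Real.log (p m)) atTop (nhds 0) ∧
    ∃ K : ℝ, ∀ m, δ m ≤ K

/-- The neighbourhoods `[-T-ε, -T+ε] ∪ [T-ε, T+ε]` of `±T` where `T = σ √C`. -/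
def densitySupport (σ C ε : ℝ) : Set ℝ :=
  Set.Icc (-(σ * Real.sqrt C) - ε) (-(σ * Real.sqrt C) + ε) ∪
    Set.Icc (σ * Real.sqrt C - ε) (σ * Real.sqrt C + ε)

/-- Assumption (C): `ν` has a positive bounded Lebesgue density `ρ` on
`[-T-ε, -T+ε] ∪ [T-ε, T+ε]`, where `T = σ √C`. -/
def AssumptionC (ν : Measure ℝ) (σ C : ℝ) (ρ : ℝ → ℝ) : Prop :=
  ∃ ε : ℝ, 0 < ε ∧
    (∀ x ∈ densitySupport σ C ε, 0 < ρ x) ∧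
    (∃ K : ℝ, ∀ x ∈ densitySupport σ C ε, ρ x ≤ K) ∧
    ∀ s : Set ℝ, MeasurableSet s → s ⊆ densitySupport σ C ε →
      ν s = ENNReal.ofReal (∫ x in s, ρ x)

/-- The one-sided limits `ρ(0⁻) = ρm` and `ρ(0⁺) = ρp` exist and are finite and positive. -/
def RhoLimits (ρ : ℝ → ℝ) (ρm ρp : ℝ) : Prop :=
  0 < ρm ∧ 0 < ρp ∧
    Tendsto ρ (nhdsWithin 0 (Set.Iio 0)) (nhds ρm) ∧
    Tendsto ρ (nhdsWithin 0 (Set.Ioi 0)) (nhds ρp)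

/-- `v = n δ² f²`. -/
def vseq (n : ℕ → ℕ) (p δ : ℕ → ℝ) (m : ℕ) : ℝ :=
  (n m : ℝ) * δ m ^ 2 * fsp (p m) ^ 2

/-- A multiple testing rule with risks `R` is asymptotically Bayes optimal under
sparsity relative to the Bayes-oracle risks `RB` if `R/RB → 1`. -/
def ABOS (R RB : ℕ → ℝ) : Prop :=
  Tendsto (fun m => R m / RB m) atTop (nhds 1)

/-- The risk of the Bayes oracle, with `δ₀ = δ δ_A`. -/
def oracleRisk (σ : ℝ) (ν : Measure ℝ) (n : ℕ → ℕ) (p δ δA : ℕ → ℝ)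
    (a b : ℕ → ℝ) (m : ℕ) : ℝ :=
  fixedRisk m σ ν (n m) (p m) (δ m * δA m) (δA m) (a m) (b m)

/-- A sequence tends to `s ∈ (0, ∞]`. -/
def TendstoPosOrTop (g : ℕ → ℝ) : Prop :=
  (∃ s : ℝ, 0 < s ∧ Tendsto g atTop (nhds s)) ∨ Tendsto g atTop atTop

/-- The defining equation of the symmetric BFDR level-`α` threshold `c`. -/
def BFDREq (σ : ℝ) (ν : Measure ℝ) (n : ℕ) (f α c : ℝ) : Prop :=
  α / (f * (1 - α)) =
    2 * (1 - Phi c) /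
      (2 - ∫ μ, (Phi (c + Real.sqrt n * μ / σ) + Phi (c - Real.sqrt n * μ / σ)) ∂ν)

/-- The conditions on `α` of Theorem `TH_BFDR`: `α ∈ (0, 1-p)`, `α → α_∞ < 1`,
`f/α → ∞`, `log(f/α)/n → C₀ < ∞` with `ν(-σ√(2C₀), σ√(2C₀)) < 1` and
no `ν`-atoms at `±σ√(2C₀)`. -/
def BFDRalphaConditions (σ : ℝ) (ν : Measure ℝ) (n : ℕ → ℕ) (p α : ℕ → ℝ)
    (αinf C0 : ℝ) : Prop :=
  (∀ m, 0 < α m ∧ α m < 1 - p m) ∧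
    αinf < 1 ∧ Tendsto α atTop (nhds αinf) ∧
    Tendsto (fun m => fsp (p m) / α m) atTop atTop ∧
    Tendsto (fun m => Real.log (fsp (p m) / α m) / (n m : ℝ)) atTop (nhds C0) ∧
    ν (Set.Ioo (-(σ * Real.sqrt (2 * C0))) (σ * Real.sqrt (2 * C0))) < 1 ∧
    ν {σ * Real.sqrt (2 * C0)} = 0 ∧ ν {-(σ * Real.sqrt (2 * C0))} = 0

/-- The conditions under which the BFDR rule is ABOS:
`log(fδ√n)/log(f/α) → 1` and `2 log(αδ√n) - log log (f/α) → -∞`. -/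
def BFDRoptConditions (n : ℕ → ℕ) (p δ α : ℕ → ℝ) : Prop :=
  Tendsto (fun m => Real.log (fsp (p m) * δ m * Real.sqrt (n m)) /
      Real.log (fsp (p m) / α m)) atTop (nhds 1) ∧
    Tendsto (fun m => 2 * Real.log (α m * δ m * Real.sqrt (n m)) -
      Real.log (Real.log (fsp (p m) / α m))) atTop atBot

/-- The risk of the rule rejecting `H₀ᵢ` when `√n |X̄ᵢ| / σ ≥ c m`. -/
def symmRisk (σ : ℝ) (ν : Measure ℝ) (n : ℕ → ℕ) (p δ δA c : ℕ → ℝ) (m : ℕ) : ℝ :=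
  fixedRisk m σ ν (n m) (p m) (δ m * δA m) (δA m)
    (-(σ * c m / Real.sqrt (n m))) (σ * c m / Real.sqrt (n m))

end
namespace BFDRaux
open Real Set

noncomputable def gpdf (t : ℝ) : ℝ := (Real.sqrt (2 * Real.pi))⁻¹ * Real.exp (-(t ^ 2) / 2)

lemma gpdf_pos (t : ℝ) : 0 < gpdf t := by
  have h : 0 < Real.sqrt (2 * Real.pi) := Real.sqrt_pos.2 (by positivity)
  exact mul_pos (inv_pos.2 h) (Real.exp_pos _)

lemma gpdf_even (t : ℝ) : gpdf (-t) = gpdf t := by simp [gpdf]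

lemma gpdf_continuous : Continuous gpdf := by
  unfold gpdf; fun_prop

lemma gpdf_integrable : Integrable gpdf := by
  have h : Integrable (fun t : ℝ => Real.exp (-(1/2 : ℝ) * t ^ 2)) :=
    integrable_exp_neg_mul_sq (by norm_num)
  have h2 := h.const_mul (Real.sqrt (2 * Real.pi))⁻¹
  have e : gpdf = fun t : ℝ => (Real.sqrt (2 * Real.pi))⁻¹ * Real.exp (-(1/2 : ℝ) * t ^ 2) := by
    funext t; unfold gpdf; congr 1; ring
  rw [e]; exact h2

lemma integral_gpdf : ∫ t, gpdf t = 1 := by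
  have h := integral_gaussian (1/2 : ℝ)
  have h2 : ∫ t : ℝ, Real.exp (-(t ^ 2) / 2) = Real.sqrt (2 * Real.pi) := by
    rw [show ∫ t : ℝ, Real.exp (-(t ^ 2) / 2) = ∫ t : ℝ, Real.exp (-(1/2 : ℝ) * t ^ 2)
      from by congr 1; funext t; congr 1; ring, h]
    rw [show π/(1/2:ℝ) = 2*π by ring]
  have hs : Real.sqrt (2 * Real.pi) ≠ 0 := by positivity
  unfold gpdf
  rw [MeasureTheory.integral_const_mul, h2, inv_mul_cancel₀ hs]

lemma Phi_eq (x : ℝ) : Phi x = ∫ t in Iic x, gpdf t := rfl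

lemma Phi_sub_Phi (a b : ℝ) : Phi b - Phi a = ∫ t in a..b, gpdf t :=
  (intervalIntegral.integral_Iic_sub_Iic) gpdf_integrable.integrableOn
    gpdf_integrable.integrableOn

lemma one_sub_Phi (x : ℝ) : 1 - Phi x = ∫ t in Ioi x, gpdf t := by
  have h := intervalIntegral.integral_Iic_add_Ioi (b := x) (μ := volume)
    gpdf_integrable.integrableOn gpdf_integrable.integrableOn
  rw [integral_gpdf] at h
  rw [Phi_eq]; linarith

lemma hasDerivAt_Phi (x : ℝ) : HasDerivAt Phi (gpdf x) x := by
  have key : HasDerivAt (fun u => ∫ t in (0:ℝ)..u, gpdf t) (gpdf x) x :=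
    intervalIntegral.integral_hasDerivAt_right
      (gpdf_continuous.intervalIntegrable _ _)
      (gpdf_continuous.stronglyMeasurableAtFilter _ _)
      gpdf_continuous.continuousAt
  have h2 : HasDerivAt (fun u => Phi 0 + ∫ t in (0:ℝ)..u, gpdf t) (gpdf x) x :=
    key.const_add _
  refine h2.congr_of_eventuallyEq (Filter.Eventually.of_forall fun y => ?_)
  show Phi y = Phi 0 + ∫ t in (0:ℝ)..y, gpdf t
  have := Phi_sub_Phi 0 y; linarith

lemma Phi_continuous : Continuous Phi :=
  continuous_iff_continuousAt.2 fun x => (hasDerivAt_Phi x).continuousAt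

lemma Phi_lt_Phi {a b : ℝ} (h : a < b) : Phi a < Phi b := by
  have hpos : 0 < ∫ t in a..b, gpdf t :=
    intervalIntegral.intervalIntegral_pos_of_pos
      (gpdf_continuous.intervalIntegrable _ _) gpdf_pos h
  have := Phi_sub_Phi a b
  linarith

lemma Phi_mono : Monotone Phi := fun a b h => by
  rcases eq_or_lt_of_le h with rfl | h
  · exact le_refl _
  · exact (Phi_lt_Phi h).le

lemma Phi_lt_one (x : ℝ) : Phi x < 1 := by
  have h : 0 < ∫ t in Ioi x, gpdf t := by
    refine (setIntegral_pos_iff_support_of_nonneg_ae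
      (Filter.Eventually.of_forall fun t => (gpdf_pos t).le)
      gpdf_integrable.integrableOn).2 ?_
    have hsupp : Function.support gpdf = Set.univ :=
      Set.eq_univ_of_forall fun t => (gpdf_pos t).ne'
    rw [hsupp, Set.univ_inter, Real.volume_Ioi]
    exact ENNReal.zero_lt_top
  have := one_sub_Phi x
  linarith

lemma Phi_pos (x : ℝ) : 0 < Phi x := by
  rw [Phi_eq]
  refine (setIntegral_pos_iff_support_of_nonneg_ae
    (Filter.Eventually.of_forall fun t => (gpdf_pos t).le)
    gpdf_integrable.integrableOn).2 ?_
  have hsupp : Function.support gpdf = Set.univ :=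
    Set.eq_univ_of_forall fun t => (gpdf_pos t).ne'
  rw [hsupp, Set.univ_inter, Real.volume_Iic]
  exact ENNReal.zero_lt_top

lemma Phi_neg (x : ℝ) : Phi (-x) = 1 - Phi x := by
  rw [Phi_eq, one_sub_Phi]
  have h : ∫ t in Iic (-x), gpdf t = ∫ t in Iic (-x), gpdf (-t) :=
    setIntegral_congr_fun measurableSet_Iic fun t _ => (gpdf_even t).symm
  rw [h, integral_comp_neg_Iic, neg_neg]

lemma Phi_zero : Phi 0 = 1/2 := by
  have h := Phi_neg 0
  rw [neg_zero] at h
  linarith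


lemma setIntegral_Ioi_comp_sub (f : ℝ → ℝ) (c a : ℝ) :
    ∫ t in Ioi c, f (t - a) = ∫ t in Ioi (c - a), f t := by
  rw [← integral_indicator measurableSet_Ioi, ← integral_indicator measurableSet_Ioi]
  rw [← integral_sub_right_eq_self ((Ioi (c - a)).indicator f) a]
  congr 1; funext t
  by_cases h : t ∈ Ioi c
  · rw [Set.indicator_of_mem h, Set.indicator_of_mem (by simpa [sub_lt_sub_iff_right] using h)]
  · rw [Set.indicator_of_notMem h, Set.indicator_of_notMem (by
      simpa [mem_Ioi, sub_lt_sub_iff_right] using h)]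

noncomputable def Gf (a c : ℝ) : ℝ := Phi (-c - a) + 1 - Phi (c - a)
noncomputable def Tf (c : ℝ) : ℝ := 2 * (1 - Phi c)

lemma Tf_pos (c : ℝ) : 0 < Tf c := by
  have := Phi_lt_one c; unfold Tf; linarith

lemma Gf_pos (a c : ℝ) : 0 < Gf a c := by
  have h1 := Phi_pos (-c - a); have h2 := Phi_lt_one (c - a); unfold Gf; linarith

lemma Gf_le_two (a c : ℝ) : Gf a c ≤ 2 := by
  have h1 := Phi_lt_one (-c - a); have h2 := Phi_pos (c - a); unfold Gf; linarith

lemma Gf_zero_left (c : ℝ) : Gf 0 c = Tf c := by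
  unfold Gf Tf
  rw [show -c - 0 = -c by ring, Phi_neg, sub_zero]; ring

lemma integrable_shift (a : ℝ) : Integrable (fun t : ℝ => gpdf (t - a)) :=
  gpdf_integrable.comp_sub_right a

lemma Gf_eq (a c : ℝ) : Gf a c = ∫ t in Ioi c, (gpdf (t - a) + gpdf (t + a)) := by
  have h1 : 1 - Phi (c - a) = ∫ t in Ioi c, gpdf (t - a) := by
    rw [one_sub_Phi, ← setIntegral_Ioi_comp_sub gpdf c a]
  have h2 : Phi (-c - a) = ∫ t in Ioi c, gpdf (t + a) := by
    rw [show -c - a = -(c + a) by ring, Phi_neg, one_sub_Phi,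
      show c + a = c - -a by ring, ← setIntegral_Ioi_comp_sub gpdf c (-a)]
    simp only [sub_neg_eq_add]
  rw [integral_add ((integrable_shift a).integrableOn)
    (by have := (integrable_shift (-a)).integrableOn (s := Ioi c); simp only [sub_neg_eq_add] at this; exact this)]
  rw [← h1, ← h2]; unfold Gf; ring

noncomputable def Lf (a t : ℝ) : ℝ := Real.exp (-(a ^ 2) / 2) * Real.cosh (a * t)

lemma Lf_pos (a t : ℝ) : 0 < Lf a t :=
  mul_pos (Real.exp_pos _) (Real.cosh_pos _)

lemma gpdf_mlr (a t : ℝ) : gpdf (t - a) + gpdf (t + a) = 2 * gpdf t * Lf a t := by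
  have e1 : -((t - a) ^ 2) / 2 = (-(t ^ 2) / 2) + ((-(a ^ 2) / 2) + (a * t)) := by ring
  have e2 : -((t + a) ^ 2) / 2 = (-(t ^ 2) / 2) + ((-(a ^ 2) / 2) + (-(a * t))) := by ring
  unfold gpdf Lf
  rw [e1, e2, Real.exp_add, Real.exp_add, Real.exp_add, Real.exp_add, Real.cosh_eq]
  have := Real.exp_ne_zero (a * t)
  rw [Real.exp_neg]
  field_simp

lemma Lf_lt (a : ℝ) (ha : a ≠ 0) {s t : ℝ} (hs : 0 ≤ s) (hst : s < t) :
    Lf a s < Lf a t := by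
  unfold Lf
  refine mul_lt_mul_of_pos_left ?_ (Real.exp_pos _)
  rw [Real.cosh_lt_cosh, abs_mul, abs_mul]
  have ht : (0:ℝ) < t := lt_of_le_of_lt hs hst
  rw [abs_of_nonneg hs, abs_of_pos ht]
  exact mul_lt_mul_of_pos_left hst (abs_pos.2 ha)

lemma Tf_eq (c : ℝ) : Tf c = ∫ t in Ioi c, 2 * gpdf t := by
  rw [Tf, one_sub_Phi, integral_const_mul]

lemma key_ineq (a : ℝ) (ha : a ≠ 0) {c : ℝ} (hc : 0 ≤ c) :
    Lf a c * Tf c < Gf a c := by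
  have hint1 : IntegrableOn (fun t => gpdf (t - a) + gpdf (t + a)) (Ioi c) :=
    ((integrable_shift a).add (by simpa using integrable_shift (-a))).integrableOn
  have hint2 : IntegrableOn (fun t => Lf a c * (2 * gpdf t)) (Ioi c) :=
    ((gpdf_integrable.const_mul 2).const_mul (Lf a c)).integrableOn
  have hT : Lf a c * Tf c = ∫ t in Ioi c, Lf a c * (2 * gpdf t) := by
    rw [Tf_eq, integral_const_mul, integral_const_mul]
    rw [integral_const_mul]
  rw [Gf_eq, hT, ← sub_pos, ← integral_sub hint1 hint2]
  refine (setIntegral_pos_iff_support_of_nonneg_ae ?_ (hint1.sub hint2)).2 ?_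
  · refine (ae_restrict_iff' measurableSet_Ioi).2 (Filter.Eventually.of_forall fun t ht => ?_)
    have h := Lf_lt a ha hc ht
    have := gpdf_pos t
    have hm := gpdf_mlr a t
    simp only [Pi.sub_apply, Pi.zero_apply]
    nlinarith
  · have hsub : Ioi c ⊆ Function.support
        (fun t => gpdf (t - a) + gpdf (t + a) - Lf a c * (2 * gpdf t)) := by
      intro t ht
      have h := Lf_lt a ha hc ht
      have := gpdf_pos t
      have hm := gpdf_mlr a t
      rw [Function.mem_support]
      intro hzero; nlinarith
    calc (0:ℝ≥0∞) < volume (Ioi c) := by rw [Real.volume_Ioi]; exact ENNReal.zero_lt_top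
    _ ≤ _ := by
        refine measure_mono ?_
        exact subset_inter hsub (subset_refl _)

lemma Gf_continuous (a : ℝ) : Continuous fun c => Gf a c := by
  unfold Gf
  exact ((Phi_continuous.comp (continuous_id.neg.sub continuous_const)).add
    continuous_const).sub (Phi_continuous.comp (continuous_id.sub continuous_const))

lemma Tf_continuous : Continuous Tf := by
  unfold Tf
  exact continuous_const.mul (continuous_const.sub Phi_continuous)

lemma hasDerivAt_Tf (c : ℝ) : HasDerivAt Tf (-(2 * gpdf c)) c := by
  have h : HasDerivAt (fun c => 1 - Phi c) (-gpdf c) c := (hasDerivAt_Phi c).const_sub 1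
  have := h.const_mul 2
  show HasDerivAt (fun c => 2 * (1 - Phi c)) _ c
  exact this.congr_deriv (by ring)

lemma hasDerivAt_Gf (a c : ℝ) :
    HasDerivAt (fun c => Gf a c) (-(gpdf (c - a) + gpdf (c + a))) c := by
  have hinner1 : HasDerivAt (fun c : ℝ => -c - a) (-1) c := by
    simpa using ((hasDerivAt_id c).neg.sub_const a)
  have hinner2 : HasDerivAt (fun c : ℝ => c - a) 1 c := (hasDerivAt_id c).sub_const a
  have h1 : HasDerivAt (fun c : ℝ => Phi (-c - a)) (gpdf (-c - a) * (-1)) c :=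
    by have := (hasDerivAt_Phi (-c - a)).comp c hinner1; exact this
  have h2 : HasDerivAt (fun c : ℝ => Phi (c - a)) (gpdf (c - a) * 1) c :=
    by have := (hasDerivAt_Phi (c - a)).comp c hinner2; exact this
  have := (h1.add_const 1).sub h2
  have h3 : HasDerivAt (fun c => Gf a c) (gpdf (-c - a) * -1 - gpdf (c - a) * 1) c := this
  convert h3 using 1
  rw [show -c - a = -(c + a) by ring, gpdf_even]
  ring

lemma ratio_strictMonoOn (a : ℝ) (ha : a ≠ 0) :
    StrictMonoOn (fun c => Gf a c / Tf c) (Ici 0) := by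
  refine strictMonoOn_of_deriv_pos (convex_Ici 0) ?_ ?_
  · exact ContinuousOn.div (Gf_continuous a).continuousOn Tf_continuous.continuousOn
      fun x _ => (Tf_pos x).ne'
  · intro x hx
    rw [interior_Ici] at hx
    have hG := hasDerivAt_Gf a x
    have hT := hasDerivAt_Tf x
    have hd := hG.div hT (Tf_pos x).ne'
    rw [show (fun c => Gf a c / Tf c) = (fun c => Gf a c) / Tf from rfl, hd.deriv]
    refine div_pos ?_ (by have := Tf_pos x; positivity)
    have hkey := key_ineq a ha (le_of_lt hx)
    have hm := gpdf_mlr a x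
    have h1 := gpdf_pos x
    have h2 := Tf_pos x
    nlinarith


lemma Gf_continuous_a (c : ℝ) : Continuous fun a => Gf a c := by
  unfold Gf
  exact ((Phi_continuous.comp (continuous_const.sub continuous_id)).add
    continuous_const).sub (Phi_continuous.comp (continuous_const.sub continuous_id))

lemma mills {c : ℝ} (hc : 0 < c) : 1 - Phi c ≤ gpdf c / c := by
  rw [one_sub_Phi]
  have hpt : ∀ t ∈ Ioi c, gpdf t ≤ gpdf c * Real.exp (-c * (t - c)) := by
    intro t ht
    unfold gpdf
    rw [mul_assoc, ← Real.exp_add]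
    refine mul_le_mul_of_nonneg_left (Real.exp_le_exp.2 ?_) (by positivity)
    nlinarith [sq_nonneg (t - c)]
  have hre : (fun t : ℝ => gpdf c * Real.exp (-c * (t - c)))
      = fun t : ℝ => (gpdf c * Real.exp (c ^ 2)) * Real.exp (-c * t) := by
    funext t
    rw [mul_assoc, ← Real.exp_add]
    congr 1; ring
  have hint : IntegrableOn (fun t => gpdf c * Real.exp (-c * (t - c))) (Ioi c) := by
    rw [hre]
    exact (exp_neg_integrableOn_Ioi c hc).const_mul _
  have hval : ∫ t in Ioi c, Real.exp (-c * (t - c)) = 1 / c := by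
    have hderiv : ∀ x ∈ Ici c, HasDerivAt (fun t => -Real.exp (-c * (t - c)) / c)
        (Real.exp (-c * (x - c))) x := by
      intro x _
      have hg : HasDerivAt (fun t : ℝ => -c * (t - c)) (-c) x := by
        simpa using ((hasDerivAt_id x).sub_const c).const_mul (-c)
      have he := (Real.hasDerivAt_exp (-c * (x - c))).comp x hg
      have := (he.neg).div_const c
      exact this.congr_deriv (by rw [mul_neg, neg_neg, mul_div_assoc, div_self hc.ne', mul_one])
    have hint2 : IntegrableOn (fun t => Real.exp (-c * (t - c))) (Ioi c) := by
      have := hint.const_mul (gpdf c)⁻¹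
      refine this.congr (Filter.Eventually.of_forall fun t => ?_)
      field_simp [(gpdf_pos c).ne']
    have htend : Tendsto (fun x => -Real.exp (-c * (x - c)) / c) atTop (nhds 0) := by
      have h1 : Tendsto (fun x : ℝ => -c * (x - c)) atTop atBot := by
        refine Tendsto.const_mul_atTop_of_neg (neg_neg_iff_pos.2 hc) ?_
        · exact tendsto_atTop_add_const_right _ _ tendsto_id
      have h2 := (Real.tendsto_exp_atBot.comp h1).neg.div_const c
      simpa using h2
    have := integral_Ioi_of_hasDerivAt_of_tendsto' hderiv hint2 htend
    rw [this]
    rw [sub_self, mul_zero, Real.exp_zero]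
    ring
  calc ∫ t in Ioi c, gpdf t ≤ ∫ t in Ioi c, gpdf c * Real.exp (-c * (t - c)) :=
        setIntegral_mono_on gpdf_integrable.integrableOn hint measurableSet_Ioi hpt
  _ = gpdf c * (1 / c) := by rw [integral_const_mul, hval]
  _ = gpdf c / c := by ring

lemma window {c η : ℝ} (hη : 0 < η) (h : η ≤ c) :
    η * gpdf c ≤ Phi c - Phi (c - η) := by
  rw [Phi_sub_Phi (c - η) c, intervalIntegral.integral_of_le (by linarith)]
  have hpt : ∀ t ∈ Ioc (c - η) c, gpdf c ≤ gpdf t := by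
    intro t ht
    unfold gpdf
    refine mul_le_mul_of_nonneg_left (Real.exp_le_exp.2 ?_) (by positivity)
    have h1 : c - η < t := ht.1
    have h2 : t ≤ c := ht.2
    nlinarith
  have hconst : ∫ _ in Ioc (c - η) c, gpdf c = η * gpdf c := by
    rw [setIntegral_const, measureReal_def, Real.volume_Ioc, smul_eq_mul]
    rw [ENNReal.toReal_ofReal (by linarith)]
    ring_nf
  calc η * gpdf c = ∫ _ in Ioc (c - η) c, gpdf c := hconst.symm
  _ ≤ ∫ t in Ioc (c - η) c, gpdf t := by
      refine setIntegral_mono_on ?_ gpdf_integrable.integrableOn measurableSet_Ioc hpt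
      exact integrableOn_const (by rw [Real.volume_Ioc]; exact ENNReal.ofReal_ne_top)

lemma Mratio_tendsto {η : ℝ} (hη : 0 < η) :
    Tendsto (fun c => (1 - Phi (c - η)) / Tf c) atTop atTop := by
  refine tendsto_atTop_mono' atTop (f₁ := fun c => η * c / 2) ?_ ?_
  · filter_upwards [eventually_ge_atTop (max η 1)] with c hc
    have hcη : η ≤ c := le_trans (le_max_left _ _) hc
    have hc0 : (0:ℝ) < c := lt_of_lt_of_le one_pos (le_trans (le_max_right _ _) hc)
    have hm := mills hc0
    have hw := window hη hcη
    have hT := Tf_pos c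
    have h1 := Phi_lt_one c
    have hg := gpdf_pos c
    rw [le_div_iff₀ hT]
    have hmul : c * (1 - Phi c) ≤ gpdf c := by
      rw [div_eq_mul_inv] at hm
      calc c * (1 - Phi c) ≤ c * (gpdf c * c⁻¹) := by
            exact mul_le_mul_of_nonneg_left hm hc0.le
      _ = gpdf c := by field_simp
    unfold Tf
    nlinarith
  · exact Tendsto.atTop_div_const (by norm_num)
      (Tendsto.const_mul_atTop hη tendsto_id)

lemma Gf_lower {η' : ℝ} (hη' : 0 < η') {a : ℝ} (ha : η' ≤ |a|) (c : ℝ) :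
    1 - Phi (c - η') ≤ Gf a c := by
  rcases le_abs.1 ha with h | h
  · have h1 := Phi_mono (show c - a ≤ c - η' by linarith)
    have h2 := Phi_pos (-c - a)
    unfold Gf; linarith
  · have e : -c - a = -(c + a) := by ring
    have h1 := Phi_mono (show c + a ≤ c - η' by linarith)
    have h2 := Phi_lt_one (c - a)
    unfold Gf
    rw [e, Phi_neg]
    linarith


section MeasureLevel

variable {ν : Measure ℝ} [IsProbabilityMeasure ν] {s : ℝ → ℝ}

lemma Gf_integrable (hs : Continuous s) (c : ℝ) :
    Integrable (fun μ => Gf (s μ) c) ν := by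
  refine Integrable.mono' (integrable_const (2:ℝ))
    ((Gf_continuous_a c).comp hs).aestronglyMeasurable
    (Filter.Eventually.of_forall fun μ => ?_)
  rw [Real.norm_eq_abs, abs_of_pos (Gf_pos _ _)]
  exact Gf_le_two _ _

lemma g_continuous (hs : Continuous s) :
    Continuous fun c => ∫ μ, Gf (s μ) c ∂ν := by
  refine continuous_of_dominated
    (fun c => ((Gf_continuous_a c).comp hs).aestronglyMeasurable)
    (fun c => Filter.Eventually.of_forall fun μ => ?_) (integrable_const 2)
    (Filter.Eventually.of_forall fun μ => Gf_continuous (s μ))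
  rw [Real.norm_eq_abs, abs_of_pos (Gf_pos _ _)]
  exact Gf_le_two _ _

lemma g_pos (hs : Continuous s) (c : ℝ) : 0 < ∫ μ, Gf (s μ) c ∂ν := by
  refine (integral_pos_iff_support_of_nonneg_ae
    (Filter.Eventually.of_forall fun μ => (Gf_pos _ _).le) (Gf_integrable hs c)).2 ?_
  have h : Function.support (fun μ => Gf (s μ) c) = Set.univ :=
    Set.eq_univ_of_forall fun μ => (Gf_pos _ _).ne'
  rw [h, measure_univ]
  norm_num

lemma nu_compl_pos (hν : ν {0} < 1) : 0 < ν ({(0:ℝ)}ᶜ) := by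
  have h := prob_compl_eq_one_sub (μ := ν) (measurableSet_singleton (0:ℝ))
  rw [h]
  exact tsub_pos_iff_lt.2 hν

lemma h_lt (hν : ν {0} < 1) (hs : Continuous s) (hz : ∀ μ : ℝ, μ ≠ 0 → s μ ≠ 0)
    {c₁ c₂ : ℝ} (h0 : 0 ≤ c₁) (h12 : c₁ < c₂) :
    (∫ μ, Gf (s μ) c₁ ∂ν) / Tf c₁ < (∫ μ, Gf (s μ) c₂ ∂ν) / Tf c₂ := by
  have hmem1 : c₁ ∈ Ici (0:ℝ) := h0
  have hmem2 : c₂ ∈ Ici (0:ℝ) := le_trans h0 h12.le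
  have hle : ∀ a : ℝ, Gf a c₁ / Tf c₁ ≤ Gf a c₂ / Tf c₂ := by
    intro a; by_cases ha : a = 0
    · subst ha
      rw [Gf_zero_left, Gf_zero_left, div_self (Tf_pos c₁).ne', div_self (Tf_pos c₂).ne']
    · exact (ratio_strictMonoOn a ha hmem1 hmem2 h12).le
  have hi1 := (Gf_integrable (ν := ν) hs c₁).div_const (Tf c₁)
  have hi2 := (Gf_integrable (ν := ν) hs c₂).div_const (Tf c₂)
  rw [← integral_div, ← integral_div, ← sub_pos, ← integral_sub hi2 hi1]
  refine (integral_pos_iff_support_of_nonneg_ae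
    (Filter.Eventually.of_forall fun μ => sub_nonneg.2 (hle (s μ))) (hi2.sub hi1)).2 ?_
  refine lt_of_lt_of_le (nu_compl_pos hν) (measure_mono ?_)
  intro μ hμ
  rw [Function.mem_support]
  have hstrict := ratio_strictMonoOn (s μ) (hz μ (Set.mem_compl_singleton_iff.1 hμ))
    hmem1 hmem2 h12
  exact (sub_pos.2 hstrict).ne'

lemma exists_eta (hν : ν {0} < 1) : ∃ η : ℝ, 0 < η ∧ 0 < ν {μ : ℝ | η ≤ |μ|} := by
  by_contra h
  push_neg at h
  have hz : ∀ n : ℕ, ν {μ : ℝ | 1/(n+1 : ℝ) ≤ |μ|} = 0 := fun n =>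
    le_antisymm (h _ (by positivity)) (zero_le)
  have hcov : {(0:ℝ)}ᶜ ⊆ ⋃ n : ℕ, {μ : ℝ | 1/(n+1:ℝ) ≤ |μ|} := by
    intro μ hμ
    have habs : 0 < |μ| := abs_pos.2 (Set.mem_compl_singleton_iff.1 hμ)
    obtain ⟨n, hn⟩ := exists_nat_one_div_lt habs
    exact Set.mem_iUnion.2 ⟨n, le_of_lt hn⟩
  have hnull : ν ({(0:ℝ)}ᶜ) = 0 := measure_mono_null hcov (measure_iUnion_null hz)
  exact absurd hnull (nu_compl_pos hν).ne'

lemma h_atTop (hν : ν {0} < 1) (hs : Continuous s) {k : ℝ} (hk : 0 < k)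
    (hsk : ∀ μ, s μ = k * μ) :
    Tendsto (fun c => (∫ μ, Gf (s μ) c ∂ν) / Tf c) atTop atTop := by
  obtain ⟨η, hη, hE⟩ := exists_eta hν
  set E := {μ : ℝ | η ≤ |μ|} with hEdef
  have hEm : MeasurableSet E := measurableSet_le measurable_const measurable_abs
  have hKpos : 0 < (ν E).toReal := ENNReal.toReal_pos hE.ne' (measure_ne_top ν E)
  have hη' : 0 < k * η := mul_pos hk hη
  have hlow : ∀ c : ℝ, (ν E).toReal * ((1 - Phi (c - k*η)) / Tf c)
      ≤ (∫ μ, Gf (s μ) c ∂ν) / Tf c := by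
    intro c
    rw [mul_div_assoc']
    have hTc := Tf_pos c
    gcongr
    have hind : ∫ μ, E.indicator (fun _ => 1 - Phi (c - k*η)) μ ∂ν
        = (ν E).toReal * (1 - Phi (c - k*η)) := by
      rw [integral_indicator_const _ hEm, smul_eq_mul, measureReal_def]
    rw [← hind]
    refine integral_mono ((integrable_const _).indicator hEm) (Gf_integrable hs c) ?_
    intro μ
    by_cases hμ : μ ∈ E
    · rw [Set.indicator_of_mem hμ]
      refine Gf_lower hη' ?_ c
      rw [hsk, abs_mul, abs_of_pos hk]
      exact mul_le_mul_of_nonneg_left hμ hk.le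
    · rw [Set.indicator_of_notMem hμ]
      exact (Gf_pos _ _).le
  exact tendsto_atTop_mono hlow
    (Tendsto.const_mul_atTop hKpos (Mratio_tendsto hη'))

end MeasureLevel

end BFDRaux

/-- For a probability measure `ν` with `ν({0}) < 1`, `σ > 0`, `n ≥ 1` and
`p ∈ (0,1)`, the function `BFDR(c) = (1-p)t₁(c)/((1-p)t₁(c) + p(1 - t₂(c)))` is
continuous and strictly decreasing on `[0, ∞)`, with `BFDR(0) = 1 - p` and
`BFDR(c) → 0` as `c → ∞`. -/
theorem BFDR_strictly_decreasing
    (ν : Measure ℝ) [IsProbabilityMeasure ν] (hν : ν {0} < 1)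
    (σ : ℝ) (hσ : 0 < σ) (n : ℕ) (hn : 0 < n) (p : ℝ) (hp : p ∈ Set.Ioo (0 : ℝ) 1) :
    ContinuousOn (fun c : ℝ =>
        (1 - p) * (2 * (1 - Phi c)) /
          ((1 - p) * (2 * (1 - Phi c)) +
            p * (1 - (1 - ∫ μ, (Phi (-c - Real.sqrt n * μ / σ) + 1 -
              Phi (c - Real.sqrt n * μ / σ)) ∂ν))))
        (Set.Ici (0 : ℝ)) ∧
      StrictAntiOn (fun c : ℝ =>
        (1 - p) * (2 * (1 - Phi c)) /
          ((1 - p) * (2 * (1 - Phi c)) +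
            p * (1 - (1 - ∫ μ, (Phi (-c - Real.sqrt n * μ / σ) + 1 -
              Phi (c - Real.sqrt n * μ / σ)) ∂ν))))
        (Set.Ici (0 : ℝ)) ∧
      (1 - p) * (2 * (1 - Phi 0)) /
          ((1 - p) * (2 * (1 - Phi 0)) +
            p * (1 - (1 - ∫ μ, (Phi (-(0:ℝ) - Real.sqrt n * μ / σ) + 1 -
              Phi ((0:ℝ) - Real.sqrt n * μ / σ)) ∂ν))) = 1 - p ∧
      Tendsto (fun c : ℝ =>
        (1 - p) * (2 * (1 - Phi c)) /
          ((1 - p) * (2 * (1 - Phi c)) +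
            p * (1 - (1 - ∫ μ, (Phi (-c - Real.sqrt n * μ / σ) + 1 -
              Phi (c - Real.sqrt n * μ / σ)) ∂ν))))
        atTop (nhds 0) := by
  obtain ⟨hp0, hp1⟩ := hp
  have hq : 0 < 1 - p := by linarith
  have hs_cont : Continuous fun μ : ℝ => Real.sqrt n * μ / σ := by fun_prop
  have hkpos : 0 < Real.sqrt n / σ :=
    div_pos (Real.sqrt_pos.2 (by exact_mod_cast hn)) hσ
  have hk : ∀ μ : ℝ, Real.sqrt n * μ / σ = (Real.sqrt n / σ) * μ := fun μ => by ring
  have hz : ∀ μ : ℝ, μ ≠ 0 → Real.sqrt n * μ / σ ≠ 0 := by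
    intro μ hμ
    rw [hk]
    exact mul_ne_zero hkpos.ne' hμ
  have hfun : (fun c : ℝ =>
        (1 - p) * (2 * (1 - Phi c)) /
          ((1 - p) * (2 * (1 - Phi c)) +
            p * (1 - (1 - ∫ μ, (Phi (-c - Real.sqrt n * μ / σ) + 1 -
              Phi (c - Real.sqrt n * μ / σ)) ∂ν)))) =
      (fun c : ℝ => (1 - p) * BFDRaux.Tf c /
        ((1 - p) * BFDRaux.Tf c +
          p * ∫ μ, BFDRaux.Gf (Real.sqrt n * μ / σ) c ∂ν)) := by
    funext c
    rw [sub_sub_cancel]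
    rfl
  have hden : ∀ c : ℝ, 0 < (1 - p) * BFDRaux.Tf c +
      p * ∫ μ, BFDRaux.Gf (Real.sqrt n * μ / σ) c ∂ν := fun c =>
    add_pos (mul_pos hq (BFDRaux.Tf_pos c))
      (mul_pos hp0 (BFDRaux.g_pos (ν := ν) hs_cont c))
  rw [hfun]
  refine ⟨?_, ?_, ?_, ?_⟩
  · exact Continuous.continuousOn
      ((continuous_const.mul BFDRaux.Tf_continuous).div
        ((continuous_const.mul BFDRaux.Tf_continuous).add
          (continuous_const.mul (BFDRaux.g_continuous hs_cont)))
        fun c => (hden c).ne')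
  · intro c₁ h1 c₂ h2 h12
    dsimp only
    have hr := BFDRaux.h_lt hν hs_cont hz h1 h12
    rw [div_lt_div_iff₀ (BFDRaux.Tf_pos c₁) (BFDRaux.Tf_pos c₂)] at hr
    rw [div_lt_div_iff₀ (hden c₂) (hden c₁)]
    nlinarith [mul_pos (mul_pos hq hp0) (sub_pos.2 hr)]
  · have h1 : (fun μ : ℝ => Phi (-(0:ℝ) - Real.sqrt n * μ / σ) + 1 -
        Phi ((0:ℝ) - Real.sqrt n * μ / σ)) = fun _ : ℝ => (1:ℝ) := by
      funext μ
      rw [show -(0:ℝ) - Real.sqrt n * μ / σ = (0:ℝ) - Real.sqrt n * μ / σ by ring]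
      ring
    rw [h1, integral_const, probReal_univ]
    rw [BFDRaux.Phi_zero]
    norm_num
  · have hFeq : ∀ c : ℝ, (1 - p) * BFDRaux.Tf c /
        ((1 - p) * BFDRaux.Tf c +
          p * ∫ μ, BFDRaux.Gf (Real.sqrt n * μ / σ) c ∂ν) =
        (1 + (p / (1 - p)) *
          ((∫ μ, BFDRaux.Gf (Real.sqrt n * μ / σ) c ∂ν) / BFDRaux.Tf c))⁻¹ := by
      intro c
      have hT := (BFDRaux.Tf_pos c).ne'
      have hpos2 : 0 < 1 + (p / (1 - p)) *
          ((∫ μ, BFDRaux.Gf (Real.sqrt n * μ / σ) c ∂ν) / BFDRaux.Tf c) := by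
        have hg := BFDRaux.g_pos (ν := ν) hs_cont c
        have hTp := BFDRaux.Tf_pos c
        positivity
      rw [inv_eq_one_div, div_eq_div_iff (hden c).ne' hpos2.ne']
      field_simp
    simp only [hFeq]
    have htop : Tendsto (fun c : ℝ => 1 + (p / (1 - p)) *
        ((∫ μ, BFDRaux.Gf (Real.sqrt n * μ / σ) c ∂ν) / BFDRaux.Tf c))
        atTop atTop :=
      tendsto_atTop_add_const_left _ 1
        (Tendsto.const_mul_atTop (div_pos hp0 hq)
          (BFDRaux.h_atTop hν hs_cont hkpos hk))
    exact htop.inv_tendsto_atTop
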